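/- arXiv:2203.12491 — 2 statements merged into one kernel-verified Lean document; each statement's English description precedes it below -/
import Mathlib

section
/- Let X : Fin n₁ × Fin n₂ → ℝ be an order-2 tensor (matrix), and Π₁ ∈ ℝ^{n₁×n₁}, Π₂ ∈ ℝ^{n₂×n₂} orthogonal projections. Then ‖X - Π₁ X Π₂ᵀ‖_F² ≤ ‖X - Π₁ X‖_F² + ‖X - X Π₂ᵀ‖_F². (This is the d = 2 case of Saibaba's Lemma 2.1 for mode-wise projections.) -/
open Matrix

/-- Frobenius norm of a real matrix. -/
noncomputable def frobNorm {α β : Type*} [Fintype α] [Fintype β]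
    (A : Matrix α β ℝ) : ℝ := Real.sqrt (∑ i, ∑ j, (A i j) ^ 2)

/-- Squared Frobenius norm of a real matrix. -/
noncomputable def frobSq {α β : Type*} [Fintype α] [Fintype β]
    (A : Matrix α β ℝ) : ℝ := ∑ i, ∑ j, (A i j) ^ 2

/-- Spectral norm (largest singular value) of a real matrix: the operator norm
of the induced linear map between Euclidean spaces. -/
noncomputable def specNorm {α β : Type*} [Fintype α] [Fintype β] [DecidableEq α] [DecidableEq β]
    (A : Matrix α β ℝ) : ℝ :=
  ‖LinearMap.toContinuousLinearMap (Matrix.toEuclideanLin A)‖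

/-- Moore–Penrose pseudoinverse of a full-column-rank matrix: `C⁺ = (CᵀC)⁻¹Cᵀ`. -/
noncomputable def pinv {m k : ℕ} (C : Matrix (Fin m) (Fin k) ℝ) : Matrix (Fin k) (Fin m) ℝ :=
  (Cᵀ * C)⁻¹ * Cᵀ

/-- Mode-1 product of an order-3 tensor with a matrix. -/
def mode1 {n₁ n₂ n₃ m : ℕ} (U : Matrix (Fin m) (Fin n₁) ℝ)
    (X : Fin n₁ × Fin n₂ × Fin n₃ → ℝ) : Fin m × Fin n₂ × Fin n₃ → ℝ :=
  fun p => ∑ j, U p.1 j * X (j, p.2.1, p.2.2)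

/-- Mode-2 product of an order-3 tensor with a matrix. -/
def mode2 {n₁ n₂ n₃ m : ℕ} (V : Matrix (Fin m) (Fin n₂) ℝ)
    (X : Fin n₁ × Fin n₂ × Fin n₃ → ℝ) : Fin n₁ × Fin m × Fin n₃ → ℝ :=
  fun p => ∑ k, V p.2.1 k * X (p.1, k, p.2.2)

/-- Mode-3 product of an order-3 tensor with a matrix. -/
def mode3 {n₁ n₂ n₃ m : ℕ} (W : Matrix (Fin m) (Fin n₃) ℝ)
    (X : Fin n₁ × Fin n₂ × Fin n₃ → ℝ) : Fin n₁ × Fin n₂ × Fin m → ℝ :=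
  fun p => ∑ l, W p.2.2 l * X (p.1, p.2.1, l)

/-- Mode-1 unfolding of an order-3 tensor. -/
def unfold1 {n₁ n₂ n₃ : ℕ} (X : Fin n₁ × Fin n₂ × Fin n₃ → ℝ) :
    Matrix (Fin n₁) (Fin n₂ × Fin n₃) ℝ := Matrix.of fun j p => X (j, p.1, p.2)

/-- Mode-2 unfolding of an order-3 tensor. -/
def unfold2 {n₁ n₂ n₃ : ℕ} (X : Fin n₁ × Fin n₂ × Fin n₃ → ℝ) :
    Matrix (Fin n₂) (Fin n₁ × Fin n₃) ℝ := Matrix.of fun k p => X (p.1, k, p.2)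

/-- Mode-3 unfolding of an order-3 tensor. -/
def unfold3 {n₁ n₂ n₃ : ℕ} (X : Fin n₁ × Fin n₂ × Fin n₃ → ℝ) :
    Matrix (Fin n₃) (Fin n₁ × Fin n₂) ℝ := Matrix.of fun l p => X (p.1, p.2, l)

/-- Frobenius norm of an order-3 tensor. -/
noncomputable def tnorm {n₁ n₂ n₃ : ℕ} (X : Fin n₁ × Fin n₂ × Fin n₃ → ℝ) : ℝ :=
  Real.sqrt (∑ p, (X p) ^ 2)

/-- Squared Frobenius norm of an order-3 tensor. -/
noncomputable def tSq {n₁ n₂ n₃ : ℕ} (X : Fin n₁ × Fin n₂ × Fin n₃ → ℝ) : ℝ :=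
  ∑ p, (X p) ^ 2


lemma frobSq_eq_trace {α β : Type*} [Fintype α] [Fintype β] (A : Matrix α β ℝ) :
    frobSq A = (Aᵀ * A).trace := by
  simp only [frobSq, Matrix.trace, Matrix.diag, Matrix.mul_apply, Matrix.transpose_apply, sq]
  exact Finset.sum_comm

lemma frobSq_nonneg {α β : Type*} [Fintype α] [Fintype β] (A : Matrix α β ℝ) :
    0 ≤ frobSq A :=
  Finset.sum_nonneg fun _ _ => Finset.sum_nonneg fun _ _ => sq_nonneg _

lemma frobSq_add_of_orth {α β : Type*} [Fintype α] [Fintype β] (B C : Matrix α β ℝ)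
    (h : Bᵀ * C = 0) : frobSq (B + C) = frobSq B + frobSq C := by
  have h' : Cᵀ * B = 0 := by
    have := congrArg Matrix.transpose h
    simpa [Matrix.transpose_mul] using this
  rw [frobSq_eq_trace, frobSq_eq_trace, frobSq_eq_trace]
  simp [Matrix.transpose_add, Matrix.add_mul, Matrix.mul_add, h, h', Matrix.trace_add]

theorem stmt5 {n₁ n₂ : ℕ} (X : Matrix (Fin n₁) (Fin n₂) ℝ)
    (Pi1 : Matrix (Fin n₁) (Fin n₁) ℝ) (Pi2 : Matrix (Fin n₂) (Fin n₂) ℝ)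
    (h1idem : Pi1 * Pi1 = Pi1) (h1sym : Pi1ᵀ = Pi1)
    (h2idem : Pi2 * Pi2 = Pi2) (h2sym : Pi2ᵀ = Pi2) :
    frobSq (X - Pi1 * X * Pi2ᵀ) ≤ frobSq (X - Pi1 * X) + frobSq (X - X * Pi2ᵀ) := by
  set D := X - X * Pi2ᵀ with hD
  have hkey : X - Pi1 * X * Pi2ᵀ = (X - Pi1 * X) + Pi1 * D := by
    rw [hD]; simp only [Matrix.mul_sub, ← Matrix.mul_assoc]; abel
  have horth : (X - Pi1 * X)ᵀ * (Pi1 * D) = 0 := by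
    have : (X - Pi1 * X)ᵀ * (Pi1 * D) = Xᵀ * ((Pi1 - Pi1 * Pi1) * D) := by
      rw [Matrix.transpose_sub, Matrix.transpose_mul, h1sym]
      simp only [Matrix.sub_mul, Matrix.mul_sub, Matrix.mul_assoc]
    rw [this, h1idem]; simp
  have hsplit : D = Pi1 * D + (1 - Pi1) * D := by simp only [Matrix.sub_mul, Matrix.one_mul]; abel
  have horth2 : (Pi1 * D)ᵀ * ((1 - Pi1) * D) = 0 := by
    have : (Pi1 * D)ᵀ * ((1 - Pi1) * D) = Dᵀ * ((Pi1 - Pi1 * Pi1) * D) := by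
      rw [Matrix.transpose_mul, h1sym]; simp only [Matrix.sub_mul, Matrix.mul_sub, Matrix.one_mul, Matrix.mul_assoc]
    rw [this, h1idem]; simp
  have h1 : frobSq (X - Pi1 * X * Pi2ᵀ) = frobSq (X - Pi1 * X) + frobSq (Pi1 * D) := by
    rw [hkey, frobSq_add_of_orth _ _ horth]
  have h2 : frobSq D = frobSq (Pi1 * D) + frobSq ((1 - Pi1) * D) := by
    conv_lhs => rw [hsplit]
    exact frobSq_add_of_orth _ _ horth2
  have h3 : frobSq (Pi1 * D) ≤ frobSq D := by
    rw [h2]; linarith [frobSq_nonneg ((1 - Pi1) * D)]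
  linarith
end

section
/- Let Π₁, Π₂, Π₃ be orthogonal projections. For an order-3 tensor X ∈ ℝ^{n₁×n₂×n₃}, define (X ×ᵢ Πᵢ) as multiplication of Πᵢ along mode i. Then ‖X - X ×₁ Π₁ ×₂ Π₂ ×₃ Π₃‖_F² ≤ ∑_{i=1}^{3} ‖X - X ×ᵢ Πᵢ‖_F². -/
open Matrix

section helpers

noncomputable def tip {n₁ n₂ n₃ : ℕ} (A B : Fin n₁ × Fin n₂ × Fin n₃ → ℝ) : ℝ :=
  ∑ p, A p * B p

variable {n₁ n₂ n₃ : ℕ}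

lemma tip_mode1 (U : Matrix (Fin n₁) (Fin n₁) ℝ) (A B : Fin n₁ × Fin n₂ × Fin n₃ → ℝ) :
    tip (mode1 U A) B = tip A (mode1 Uᵀ B) := by
  simp only [tip, mode1, Finset.sum_mul, Finset.mul_sum, Matrix.transpose_apply]
  rw [Finset.sum_comm]
  conv_rhs => rw [Finset.sum_comm]
  simp only [Fintype.sum_prod_type]
  rw [Finset.sum_comm]
  refine Finset.sum_congr rfl fun i _ => Finset.sum_congr rfl fun j _ =>
    Finset.sum_congr rfl fun k _ => Finset.sum_congr rfl fun l _ => by ring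

lemma tip_mode2 (V : Matrix (Fin n₂) (Fin n₂) ℝ) (A B : Fin n₁ × Fin n₂ × Fin n₃ → ℝ) :
    tip (mode2 V A) B = tip A (mode2 Vᵀ B) := by
  simp only [tip, mode2, Finset.sum_mul, Finset.mul_sum, Matrix.transpose_apply]
  rw [Finset.sum_comm]
  conv_rhs => rw [Finset.sum_comm]
  simp only [Fintype.sum_prod_type]
  rw [Finset.sum_comm]
  conv_rhs => rw [Finset.sum_comm]
  refine Finset.sum_congr rfl fun i _ => ?_
  rw [Finset.sum_comm]
  refine Finset.sum_congr rfl fun k _ => Finset.sum_congr rfl fun k' _ =>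
    Finset.sum_congr rfl fun l _ => by ring

lemma tip_mode3 (W : Matrix (Fin n₃) (Fin n₃) ℝ) (A B : Fin n₁ × Fin n₂ × Fin n₃ → ℝ) :
    tip (mode3 W A) B = tip A (mode3 Wᵀ B) := by
  simp only [tip, mode3, Finset.sum_mul, Finset.mul_sum, Matrix.transpose_apply]
  rw [Finset.sum_comm]
  conv_rhs => rw [Finset.sum_comm]
  simp only [Fintype.sum_prod_type]
  rw [Finset.sum_comm]
  conv_rhs => rw [Finset.sum_comm]
  refine Finset.sum_congr rfl fun i _ => ?_
  rw [Finset.sum_comm]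
  conv_rhs => rw [Finset.sum_comm]
  refine Finset.sum_congr rfl fun k _ => ?_
  rw [Finset.sum_comm]
  refine Finset.sum_congr rfl fun l _ => Finset.sum_congr rfl fun l' _ => by ring

lemma mode1_sub (U : Matrix (Fin n₁) (Fin n₁) ℝ) (A B : Fin n₁ × Fin n₂ × Fin n₃ → ℝ) :
    mode1 U (A - B) = mode1 U A - mode1 U B := by
  funext p; simp [mode1, mul_sub, Finset.sum_sub_distrib]

lemma mode2_sub (V : Matrix (Fin n₂) (Fin n₂) ℝ) (A B : Fin n₁ × Fin n₂ × Fin n₃ → ℝ) :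
    mode2 V (A - B) = mode2 V A - mode2 V B := by
  funext p; simp [mode2, mul_sub, Finset.sum_sub_distrib]

lemma mode3_sub (W : Matrix (Fin n₃) (Fin n₃) ℝ) (A B : Fin n₁ × Fin n₂ × Fin n₃ → ℝ) :
    mode3 W (A - B) = mode3 W A - mode3 W B := by
  funext p; simp [mode3, mul_sub, Finset.sum_sub_distrib]

lemma mode1_comp (U V : Matrix (Fin n₁) (Fin n₁) ℝ) (A : Fin n₁ × Fin n₂ × Fin n₃ → ℝ) :
    mode1 U (mode1 V A) = mode1 (U * V) A := by
  funext p
  simp only [mode1, Matrix.mul_apply, Finset.sum_mul, Finset.mul_sum]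
  rw [Finset.sum_comm]
  exact Finset.sum_congr rfl fun i _ => Finset.sum_congr rfl fun j _ => by ring

lemma mode2_comp (U V : Matrix (Fin n₂) (Fin n₂) ℝ) (A : Fin n₁ × Fin n₂ × Fin n₃ → ℝ) :
    mode2 U (mode2 V A) = mode2 (U * V) A := by
  funext p
  simp only [mode2, Matrix.mul_apply, Finset.sum_mul, Finset.mul_sum]
  rw [Finset.sum_comm]
  exact Finset.sum_congr rfl fun i _ => Finset.sum_congr rfl fun j _ => by ring

lemma mode3_comp (U V : Matrix (Fin n₃) (Fin n₃) ℝ) (A : Fin n₁ × Fin n₂ × Fin n₃ → ℝ) :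
    mode3 U (mode3 V A) = mode3 (U * V) A := by
  funext p
  simp only [mode3, Matrix.mul_apply, Finset.sum_mul, Finset.mul_sum]
  rw [Finset.sum_comm]
  exact Finset.sum_congr rfl fun i _ => Finset.sum_congr rfl fun j _ => by ring

lemma mode1_mode2 (U : Matrix (Fin n₁) (Fin n₁) ℝ) (V : Matrix (Fin n₂) (Fin n₂) ℝ)
    (A : Fin n₁ × Fin n₂ × Fin n₃ → ℝ) :
    mode1 U (mode2 V A) = mode2 V (mode1 U A) := by
  funext p
  simp only [mode1, mode2, Finset.mul_sum]
  rw [Finset.sum_comm]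
  exact Finset.sum_congr rfl fun i _ => Finset.sum_congr rfl fun j _ => by ring

lemma mode1_mode3 (U : Matrix (Fin n₁) (Fin n₁) ℝ) (W : Matrix (Fin n₃) (Fin n₃) ℝ)
    (A : Fin n₁ × Fin n₂ × Fin n₃ → ℝ) :
    mode1 U (mode3 W A) = mode3 W (mode1 U A) := by
  funext p
  simp only [mode1, mode3, Finset.mul_sum]
  rw [Finset.sum_comm]
  exact Finset.sum_congr rfl fun i _ => Finset.sum_congr rfl fun j _ => by ring

lemma mode2_mode3 (V : Matrix (Fin n₂) (Fin n₂) ℝ) (W : Matrix (Fin n₃) (Fin n₃) ℝ)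
    (A : Fin n₁ × Fin n₂ × Fin n₃ → ℝ) :
    mode2 V (mode3 W A) = mode3 W (mode2 V A) := by
  funext p
  simp only [mode2, mode3, Finset.mul_sum]
  rw [Finset.sum_comm]
  exact Finset.sum_congr rfl fun i _ => Finset.sum_congr rfl fun j _ => by ring

lemma tip_mode1_right (U : Matrix (Fin n₁) (Fin n₁) ℝ) (A B : Fin n₁ × Fin n₂ × Fin n₃ → ℝ) :
    tip A (mode1 U B) = tip (mode1 Uᵀ A) B := by
  rw [tip_mode1, Matrix.transpose_transpose]

lemma tSq_nonneg (A : Fin n₁ × Fin n₂ × Fin n₃ → ℝ) : 0 ≤ tSq A :=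
  Finset.sum_nonneg fun _ _ => sq_nonneg _

lemma tSq_add3 (A B C : Fin n₁ × Fin n₂ × Fin n₃ → ℝ) :
    tSq (A + B + C) = tSq A + tSq B + tSq C + 2 * (tip A B + tip A C + tip B C) := by
  simp only [tSq, tip, Pi.add_apply, ← Finset.sum_add_distrib, ← Finset.mul_sum]
  rw [Finset.mul_sum, ← Finset.sum_add_distrib]
  exact Finset.sum_congr rfl fun p _ => by ring

lemma tSq_add2 (A B : Fin n₁ × Fin n₂ × Fin n₃ → ℝ) :
    tSq (A + B) = tSq A + tSq B + 2 * tip A B := by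
  simp only [tSq, tip, Pi.add_apply, Finset.mul_sum, ← Finset.sum_add_distrib]
  exact Finset.sum_congr rfl fun p _ => by ring

/-- Pythagoras for a projection along mode 1, yielding contraction. -/
lemma tSq_mode1_le (P : Matrix (Fin n₁) (Fin n₁) ℝ) (hidem : P * P = P) (hsym : Pᵀ = P)
    (Y : Fin n₁ × Fin n₂ × Fin n₃ → ℝ) : tSq (mode1 P Y) ≤ tSq Y := by
  have hcross : tip (mode1 P Y) (Y - mode1 P Y) = 0 := by
    rw [tip_mode1, hsym, mode1_sub, mode1_comp, hidem, sub_self]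
    simp [tip]
  have hpyth : tSq Y = tSq (mode1 P Y) + tSq (Y - mode1 P Y) := by
    have h := tSq_add2 (mode1 P Y) (Y - mode1 P Y)
    rw [add_sub_cancel, hcross] at h
    linarith
  have := tSq_nonneg (Y - mode1 P Y)
  linarith

lemma tSq_mode2_le (P : Matrix (Fin n₂) (Fin n₂) ℝ) (hidem : P * P = P) (hsym : Pᵀ = P)
    (Y : Fin n₁ × Fin n₂ × Fin n₃ → ℝ) : tSq (mode2 P Y) ≤ tSq Y := by
  have hcross : tip (mode2 P Y) (Y - mode2 P Y) = 0 := by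
    rw [tip_mode2, hsym, mode2_sub, mode2_comp, hidem, sub_self]
    simp [tip]
  have hpyth : tSq Y = tSq (mode2 P Y) + tSq (Y - mode2 P Y) := by
    have h := tSq_add2 (mode2 P Y) (Y - mode2 P Y)
    rw [add_sub_cancel, hcross] at h
    linarith
  have := tSq_nonneg (Y - mode2 P Y)
  linarith

end helpers

section main
variable {n₁ n₂ n₃ : ℕ}

lemma tip_mode2_right (V : Matrix (Fin n₂) (Fin n₂) ℝ) (A B : Fin n₁ × Fin n₂ × Fin n₃ → ℝ) :
    tip A (mode2 V B) = tip (mode2 Vᵀ A) B := by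
  rw [tip_mode2, Matrix.transpose_transpose]

theorem stmt6 {n₁ n₂ n₃ : ℕ} (X : Fin n₁ × Fin n₂ × Fin n₃ → ℝ)
    (Pi1 : Matrix (Fin n₁) (Fin n₁) ℝ) (Pi2 : Matrix (Fin n₂) (Fin n₂) ℝ)
    (Pi3 : Matrix (Fin n₃) (Fin n₃) ℝ)
    (h1idem : Pi1 * Pi1 = Pi1) (h1sym : Pi1ᵀ = Pi1)
    (h2idem : Pi2 * Pi2 = Pi2) (h2sym : Pi2ᵀ = Pi2)
    (h3idem : Pi3 * Pi3 = Pi3) (h3sym : Pi3ᵀ = Pi3) :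
    tSq (X - mode3 Pi3 (mode2 Pi2 (mode1 Pi1 X))) ≤
      tSq (X - mode1 Pi1 X) + tSq (X - mode2 Pi2 X) + tSq (X - mode3 Pi3 X) := by
  set A := X - mode1 Pi1 X with hA
  set B := mode1 Pi1 (X - mode2 Pi2 X) with hB
  set C := mode1 Pi1 (mode2 Pi2 (X - mode3 Pi3 X)) with hC
  have hsum : X - mode3 Pi3 (mode2 Pi2 (mode1 Pi1 X)) = A + B + C := by
    rw [hA, hB, hC, mode2_sub, mode1_sub, mode1_sub, ← mode2_mode3, ← mode1_mode3,
      ← mode1_mode2]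
    abel
  have hP1A : mode1 Pi1 A = 0 := by
    rw [hA, mode1_sub, mode1_comp, h1idem, sub_self]
  have hP2Y : mode2 Pi2 (X - mode2 Pi2 X) = 0 := by
    rw [mode2_sub, mode2_comp, h2idem, sub_self]
  have hAB : tip A B = 0 := by
    rw [hB, tip_mode1_right, h1sym, hP1A]
    simp [tip]
  have hAC : tip A C = 0 := by
    rw [hC, tip_mode1_right, h1sym, hP1A]
    simp [tip]
  have hBC : tip B C = 0 := by
    rw [hB, hC, tip_mode1, h1sym, mode1_comp, h1idem, mode1_mode2, tip_mode2_right,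
      h2sym, hP2Y]
    simp [tip]
  have hBle : tSq B ≤ tSq (X - mode2 Pi2 X) := tSq_mode1_le Pi1 h1idem h1sym _
  have hCle : tSq C ≤ tSq (X - mode3 Pi3 X) := by
    calc tSq C ≤ tSq (mode2 Pi2 (X - mode3 Pi3 X)) := tSq_mode1_le Pi1 h1idem h1sym _
      _ ≤ tSq (X - mode3 Pi3 X) := tSq_mode2_le Pi2 h2idem h2sym _
  rw [hsum, tSq_add3, hAB, hAC, hBC]
  linarith

end main
end
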